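/- For a tight IC POVM {Π_j} on ℂ^d with frame superoperator F = α I + β|1⟩⟩⟨⟨1| (α + dβ = d, α > 0), the canonical reconstruction operators Θ_j = [d² Π_j − (d − α) tr(Π_j) 1] / (d α tr(Π_j)) satisfy Σ_j |Θ_j⟩⟩⟨⟨Π_j| = I, and tr(Θ_j²) = (d² 𝓅_j − d)/α² + 1/d where 𝓅_j = tr(Π_j²)/tr(Π_j)². -/

import Mathlib

open Matrix ComplexOrder

noncomputable section

abbrev Mat (d : ℕ) := Matrix (Fin d) (Fin d) ℂ

/-- The real vector space of Hermitian `d × d` complex matrices. -/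
abbrev HermM (d : ℕ) : Submodule ℝ (Mat d) := selfAdjoint.submodule ℝ (Mat d)

/-- The identity matrix as a Hermitian matrix. -/
def hermOne (d : ℕ) : HermM d := ⟨1, IsSelfAdjoint.one (Mat d)⟩

/-- The superoperator `|A⟩⟩⟨⟨B| : X ↦ tr(B X) • A` on Hermitian matrices. -/
def outerSO (d : ℕ) (A B : HermM d) : HermM d →ₗ[ℝ] HermM d :=
  (Complex.reLm ∘ₗ Matrix.traceLinearMap (Fin d) ℝ ℂ ∘ₗ
    LinearMap.mulLeft ℝ (B : Mat d) ∘ₗ (HermM d).subtype).smulRight A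

set_option maxHeartbeats 2000000 in
/-- For a tight IC POVM with frame superoperator αI + β|1⟩⟩⟨⟨1|
(α + dβ = d, α > 0), the canonical reconstruction operators
Θ_j = [d²Π_j − (d−α) tr(Π_j) 1]/(dα tr(Π_j)) satisfy Σ_j |Θ_j⟩⟩⟨⟨Π_j| = I and
tr(Θ_j²) = (d²𝓅_j − d)/α² + 1/d, with 𝓅_j = tr(Π_j²)/tr(Π_j)². -/
theorem tightIC_canonical_reconstruction (d n : ℕ) (hd : 2 ≤ d)
    (P : Fin n → HermM d) (α β : ℝ)
    (hpsd : ∀ j, ((P j : Mat d)).PosSemidef)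
    (htrpos : ∀ j, 0 < (Matrix.trace (P j : Mat d)).re)
    (hsum : ∑ j, (P j : Mat d) = 1)
    (hα : 0 < α) (hαβ : α + d * β = d)
    (hframe : (d : ℝ) • ∑ j, ((Matrix.trace (P j : Mat d)).re)⁻¹ • outerSO d (P j) (P j) =
      α • LinearMap.id + β • outerSO d (hermOne d) (hermOne d)) :
    (∑ j, outerSO d
        ((((d : ℝ) * α * (Matrix.trace (P j : Mat d)).re))⁻¹ •
          (((d : ℝ) ^ 2) • P j -
            (((d : ℝ) - α) * (Matrix.trace (P j : Mat d)).re) • hermOne d))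
        (P j) = LinearMap.id) ∧
    (∀ j, (Matrix.trace
        (((((d : ℝ) * α * (Matrix.trace (P j : Mat d)).re))⁻¹ •
          (((d : ℝ) ^ 2) • P j -
            (((d : ℝ) - α) * (Matrix.trace (P j : Mat d)).re) • hermOne d) : HermM d) *
         ((((d : ℝ) * α * (Matrix.trace (P j : Mat d)).re))⁻¹ •
          (((d : ℝ) ^ 2) • P j -
            (((d : ℝ) - α) * (Matrix.trace (P j : Mat d)).re) • hermOne d) : HermM d) :
          Mat d)).re =
      ((d : ℝ) ^ 2 * ((Matrix.trace ((P j : Mat d) * (P j : Mat d))).re /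
        (Matrix.trace (P j : Mat d)).re ^ 2) - d) / α ^ 2 + 1 / d) := by
  have hd0 : (d:ℝ) ≠ 0 := by positivity
  have hα0 : α ≠ 0 := hα.ne'
  have ht : ∀ j, (Matrix.trace (P j : Mat d)).re ≠ 0 := fun j => (htrpos j).ne'
  have hβ : β = ((d:ℝ) - α) / d := by field_simp; linarith
  constructor
  · apply LinearMap.ext; intro x
    have key := LinearMap.congr_fun hframe x
    simp only [outerSO, LinearMap.smul_apply, LinearMap.sum_apply, LinearMap.add_apply,
      LinearMap.id_apply, LinearMap.smulRight_apply, LinearMap.comp_apply,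
      Submodule.subtype_apply, LinearMap.mulLeft_apply, Matrix.traceLinearMap_apply,
      Complex.reLm_coe] at key ⊢
    rw [show ((hermOne d : Mat d)) = 1 from rfl] at key
    simp only [one_mul] at key
    have hsum_s : ∑ j, (Matrix.trace ((P j : Mat d) * (x : Mat d))).re
        = (Matrix.trace (x : Mat d)).re := by
      rw [← Complex.re_sum, ← Matrix.trace_sum, ← Finset.sum_mul, hsum, one_mul]
    calc ∑ j, (Matrix.trace ((P j : Mat d) * (x : Mat d))).re •
            ((d * α * (Matrix.trace (P j : Mat d)).re)⁻¹ •
              ((d:ℝ) ^ 2 • P j - (((d:ℝ) - α) * (Matrix.trace (P j : Mat d)).re) • hermOne d))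
        = ∑ j, ((α⁻¹ * ((d:ℝ) * ((Matrix.trace (P j : Mat d)).re⁻¹ *
              (Matrix.trace ((P j : Mat d) * (x : Mat d))).re))) • P j -
            ((α⁻¹ * β) * (Matrix.trace ((P j : Mat d) * (x : Mat d))).re) • hermOne d) := by
          refine Finset.sum_congr rfl fun j _ => ?_
          have e1 : ((Matrix.trace ((P j : Mat d) * (x : Mat d))).re *
              ((d:ℝ) * α * (Matrix.trace (P j : Mat d)).re)⁻¹) * (d:ℝ) ^ 2
              = α⁻¹ * ((d:ℝ) * ((Matrix.trace (P j : Mat d)).re⁻¹ *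
                (Matrix.trace ((P j : Mat d) * (x : Mat d))).re)) := by
            field_simp [ht j]
          have e2 : ((Matrix.trace ((P j : Mat d) * (x : Mat d))).re *
              ((d:ℝ) * α * (Matrix.trace (P j : Mat d)).re)⁻¹) *
                (((d:ℝ) - α) * (Matrix.trace (P j : Mat d)).re)
              = (α⁻¹ * (((d:ℝ) - α) / d)) * (Matrix.trace ((P j : Mat d) * (x : Mat d))).re := by
            field_simp [ht j]
          rw [hβ, smul_smul, smul_sub, smul_smul, smul_smul, e1, e2]
      _ = α⁻¹ • ((d:ℝ) • ∑ j, (Matrix.trace (P j : Mat d)).re⁻¹ •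
            ((Matrix.trace ((P j : Mat d) * (x : Mat d))).re • P j)) -
          (α⁻¹ * β * (Matrix.trace (x : Mat d)).re) • hermOne d := by
          rw [Finset.sum_sub_distrib]
          congr 1
          · rw [Finset.smul_sum, Finset.smul_sum]
            refine Finset.sum_congr rfl fun j _ => ?_
            rw [smul_smul, smul_smul, smul_smul]
            congr 1
            ring
          · rw [← Finset.sum_smul, ← Finset.mul_sum, hsum_s]
      _ = α⁻¹ • (α • x + β • ((Matrix.trace (x : Mat d)).re • hermOne d)) -
          (α⁻¹ * β * (Matrix.trace (x : Mat d)).re) • hermOne d := by rw [key]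
      _ = x := by
          rw [smul_add, smul_smul, inv_mul_cancel₀ hα0, one_smul, smul_smul, smul_smul,
            mul_assoc]
          exact add_sub_cancel_right _ _
  · intro j
    have htj := ht j
    have hco : ((((d : ℝ) * α * (Matrix.trace (P j : Mat d)).re)⁻¹ •
          ((d : ℝ) ^ 2 • P j -
            (((d : ℝ) - α) * (Matrix.trace (P j : Mat d)).re) • hermOne d : HermM d) : HermM d) : Mat d)
        = ((d : ℝ) * α * (Matrix.trace (P j : Mat d)).re)⁻¹ •
          ((d : ℝ) ^ 2 • (P j : Mat d) -
            (((d : ℝ) - α) * (Matrix.trace (P j : Mat d)).re) • (1 : Mat d)) := rfl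
    rw [hco, smul_mul_smul_comm, Matrix.trace_smul, sub_mul, mul_sub, mul_sub]
    simp only [Matrix.trace_sub, Matrix.trace_smul, Matrix.trace_one, Matrix.mul_one,
      Matrix.one_mul, smul_eq_mul, smul_mul_assoc, mul_smul_comm, smul_smul]
    simp only [Complex.smul_re, Complex.sub_re, Complex.natCast_re, Fintype.card_fin,
      smul_eq_mul]
    field_simp
    ring
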